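/- Let n ≥ 2, d ≥ 1, δ ≥ 2 and k ≤ n·d² be integers, and let B = B(n,k,d,δ) be the generalized Behrend set, assumed nonempty, with maximum element M. Let p be a positive integer with p ≥ δ·M + 1. Let a₀, a₁, a₂, b₀, b₁, b₂ ∈ B and let α, β be integers with α ≠ 0, β ≠ 0, α + β ≠ 0, |α| ≤ δ, |β| ≤ δ and |α + β| ≤ δ. If p divides (α+β)·a₀ − β·a₂ − α·a₁ and p divides (α+β)·(a₀ + b₀) − β·(a₂ + b₂) − α·(a₁ + b₁), then a₀ = a₁ = a₂ and b₀ = b₁ = b₂. -/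
import Mathlib


/-- The generalized Behrend set `B(n, k, d, δ)`: natural numbers of the form
`y = Σ_{i=0}^{n−1} y_i (δd+1)^i` with digits `0 ≤ y_i ≤ d` and `Σ y_i² = k`. -/
def behrendSet (n k d δ : ℕ) : Set ℕ :=
  { y | ∃ f : Fin n → ℕ, (∀ i, f i ≤ d) ∧ (∑ i, (f i) ^ 2 = k) ∧
      y = ∑ i : Fin n, f i * (δ * d + 1) ^ (i : ℕ) }

/-- Bound on a three-term combination with coefficients summing to zero. -/
lemma triBound (D M c₀ c₁ c₂ x₀ x₁ x₂ : ℤ) (hsum : c₀ + c₁ + c₂ = 0)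
    (h₀ : |c₀| ≤ D) (h₁ : |c₁| ≤ D) (h₂ : |c₂| ≤ D)
    (hx₀ : 0 ≤ x₀) (hx₀' : x₀ ≤ M) (hx₁ : 0 ≤ x₁) (hx₁' : x₁ ≤ M)
    (hx₂ : 0 ≤ x₂) (hx₂' : x₂ ≤ M) :
    |c₀ * x₀ + c₁ * x₁ + c₂ * x₂| ≤ D * M := by
  rw [abs_le] at h₀ h₁ h₂ ⊢
  obtain ⟨h₀l, h₀r⟩ := h₀; obtain ⟨h₁l, h₁r⟩ := h₁; obtain ⟨h₂l, h₂r⟩ := h₂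
  constructor <;>
  · rcases le_total 0 c₀ with hc₀ | hc₀ <;> rcases le_total 0 c₁ with hc₁ | hc₁ <;>
      rcases le_total 0 c₂ with hc₂ | hc₂ <;> nlinarith

/-- Uniqueness of base-`B` representations with digits of absolute value `< B`. -/
lemma digitsZero (B : ℤ) (hB : 0 < B) :
    ∀ (n : ℕ) (c : Fin n → ℤ), (∀ i, |c i| < B) →
      (∑ i, c i * B ^ (i : ℕ)) = 0 → ∀ i, c i = 0 := by
  intro n
  induction n with
  | zero => intro c _ _ i; exact absurd i.2 (by omega)
  | succ m ih =>
    intro c hc hsum i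
    have hrw : (∑ i : Fin (m+1), c i * B ^ (i : ℕ))
        = c 0 + B * ∑ i : Fin m, c i.succ * B ^ (i : ℕ) := by
      rw [Fin.sum_univ_succ (f := fun i : Fin (m+1) => c i * B ^ (i : ℕ))]
      simp only [Finset.mul_sum, Fin.val_succ, pow_succ, pow_zero, mul_one, Fin.val_zero]
      congr 1
      exact Finset.sum_congr rfl fun j _ => by ring
    rw [hrw] at hsum
    have hd : B ∣ c 0 := ⟨-∑ i : Fin m, c i.succ * B ^ (i : ℕ), by linarith⟩
    have h0 : c 0 = 0 := Int.eq_zero_of_abs_lt_dvd hd (hc 0)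
    have htail : (∑ i : Fin m, c i.succ * B ^ (i : ℕ)) = 0 := by
      have := hsum
      rw [h0, zero_add] at this
      exact (mul_eq_zero.1 this).resolve_left (by omega)
    have hall := ih (fun i => c i.succ) (fun i => hc i.succ) htail
    rcases Fin.eq_zero_or_eq_succ i with h | ⟨j, rfl⟩
    · rw [h]; exact h0
    · exact hall j

/-- Strict convexity of squares: a weighted average with equal sums of squares
forces pointwise equality. -/
lemma convexEq (n k : ℕ) (u v : ℤ) (hu : 0 < u) (hv : 0 < v)
    (x y z : Fin n → ℕ)
    (hx : ∑ i, (x i) ^ 2 = k) (hy : ∑ i, (y i) ^ 2 = k) (hz : ∑ i, (z i) ^ 2 = k)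
    (heq : ∀ i, (u + v) * (x i : ℤ) = u * (y i : ℤ) + v * (z i : ℤ)) :
    ∀ i, x i = y i ∧ y i = z i := by
  have hxZ : ∑ i, ((x i : ℤ)) ^ 2 = (k : ℤ) := by exact_mod_cast congrArg (Nat.cast : ℕ → ℤ) hx
  have hyZ : ∑ i, ((y i : ℤ)) ^ 2 = (k : ℤ) := by exact_mod_cast congrArg (Nat.cast : ℕ → ℤ) hy
  have hzZ : ∑ i, ((z i : ℤ)) ^ 2 = (k : ℤ) := by exact_mod_cast congrArg (Nat.cast : ℕ → ℤ) hz
  have hsum : u * v * ∑ i, ((y i : ℤ) - (z i : ℤ)) ^ 2 = 0 := by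
    have h1 : ∑ i, ((u + v) * (x i : ℤ)) ^ 2
        = ∑ i, (u * (y i : ℤ) + v * (z i : ℤ)) ^ 2 :=
      Finset.sum_congr rfl fun i _ => by rw [heq i]
    have h2 : ∑ i, ((u + v) * (x i : ℤ)) ^ 2 = (u + v) ^ 2 * ∑ i, ((x i : ℤ)) ^ 2 := by
      rw [Finset.mul_sum]
      exact Finset.sum_congr rfl fun i _ => by ring
    have h3 : ∑ i, (u * (y i : ℤ) + v * (z i : ℤ)) ^ 2
        = (u + v) * (u * ∑ i, ((y i : ℤ)) ^ 2 + v * ∑ i, ((z i : ℤ)) ^ 2)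
          - u * v * ∑ i, ((y i : ℤ) - (z i : ℤ)) ^ 2 := by
      simp only [Finset.mul_sum, ← Finset.sum_sub_distrib, ← Finset.sum_add_distrib]
      exact Finset.sum_congr rfl fun i _ => by ring
    rw [h2, h3, hxZ, hyZ, hzZ] at h1
    linarith
  have hsz : ∑ i, ((y i : ℤ) - (z i : ℤ)) ^ 2 = 0 := by
    rcases mul_eq_zero.1 hsum with h | h
    · exact absurd h (by positivity)
    · exact h
  have hyz : ∀ i ∈ Finset.univ, ((y i : ℤ) - (z i : ℤ)) ^ 2 = 0 :=
    (Finset.sum_eq_zero_iff_of_nonneg fun i _ => sq_nonneg _).1 hsz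
  intro i
  have h1 : (y i : ℤ) = (z i : ℤ) := by
    have := hyz i (Finset.mem_univ i)
    have := pow_eq_zero_iff (n := 2) (by norm_num) |>.1 this
    linarith
  have h2 : (x i : ℤ) = (y i : ℤ) := by
    have h := heq i
    rw [← h1] at h
    have huv : (u + v) ≠ 0 := by positivity
    have : (u + v) * (x i : ℤ) = (u + v) * (y i : ℤ) := by linarith
    exact mul_left_cancel₀ huv this
  exact ⟨by exact_mod_cast h2, by exact_mod_cast h1⟩

/-- Key Behrend-set property: if a member is a positively weighted average of two
members (with total weight at most `δ`), all three coincide. -/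
lemma behrendKey (n k d δ : ℕ) (x y z : ℕ)
    (hx : x ∈ behrendSet n k d δ) (hy : y ∈ behrendSet n k d δ)
    (hz : z ∈ behrendSet n k d δ)
    (u v : ℤ) (hu : 0 < u) (hv : 0 < v) (huv : u + v ≤ (δ : ℤ))
    (heq : (u + v) * (x : ℤ) = u * (y : ℤ) + v * (z : ℤ)) :
    x = y ∧ x = z := by
  obtain ⟨f, hfd, hfk, hxe⟩ := hx
  obtain ⟨g, hgd, hgk, hye⟩ := hy
  obtain ⟨h, hhd, hhk, hze⟩ := hz
  set B : ℤ := (δ : ℤ) * (d : ℤ) + 1 with hB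
  have hBpos : 0 < B := by
    have : (0 : ℤ) ≤ (δ : ℤ) * d := by positivity
    omega
  have hxZ : (x : ℤ) = ∑ i, (f i : ℤ) * B ^ (i : ℕ) := by
    have := congrArg (Nat.cast : ℕ → ℤ) hxe
    push_cast at this
    exact this
  have hyZ : (y : ℤ) = ∑ i, (g i : ℤ) * B ^ (i : ℕ) := by
    have := congrArg (Nat.cast : ℕ → ℤ) hye
    push_cast at this
    exact this
  have hzZ : (z : ℤ) = ∑ i, (h i : ℤ) * B ^ (i : ℕ) := by
    have := congrArg (Nat.cast : ℕ → ℤ) hze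
    push_cast at this
    exact this
  set c : Fin n → ℤ := fun i => (u + v) * (f i : ℤ) - u * (g i : ℤ) - v * (h i : ℤ) with hc
  have hsum0 : (∑ i, c i * B ^ (i : ℕ)) = 0 := by
    have expand : (∑ i, c i * B ^ (i : ℕ))
        = (u + v) * ∑ i, (f i : ℤ) * B ^ (i : ℕ)
          - u * ∑ i, (g i : ℤ) * B ^ (i : ℕ) - v * ∑ i, (h i : ℤ) * B ^ (i : ℕ) := by
      simp only [Finset.mul_sum, ← Finset.sum_sub_distrib]
      exact Finset.sum_congr rfl fun i _ => by simp only [hc]; ring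
    rw [expand, ← hxZ, ← hyZ, ← hzZ]
    linarith
  have hlt : ∀ i, |c i| < B := by
    intro i
    have huδ : u ≤ (δ : ℤ) := by linarith
    have hvδ : v ≤ (δ : ℤ) := by linarith
    have hb := triBound (δ : ℤ) (d : ℤ) (u + v) (-u) (-v) (f i) (g i) (h i)
      (by ring) (by rw [abs_of_pos (by linarith)]; exact huv)
      (by rw [abs_neg, abs_of_pos hu]; exact huδ)
      (by rw [abs_neg, abs_of_pos hv]; exact hvδ)
      (by positivity) (by exact_mod_cast hfd i)
      (by positivity) (by exact_mod_cast hgd i)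
      (by positivity) (by exact_mod_cast hhd i)
    have hce : c i = (u + v) * (f i : ℤ) + (-u) * (g i : ℤ) + (-v) * (h i : ℤ) := by
      simp only [hc]; ring
    rw [hce]
    omega
  have hzero := digitsZero B hBpos n c hlt hsum0
  have heq' : ∀ i, (u + v) * (f i : ℤ) = u * (g i : ℤ) + v * (h i : ℤ) := by
    intro i
    have := hzero i
    simp only [hc] at this
    linarith
  have hall := convexEq n k u v hu hv f g h hfk hgk hhk heq'
  constructor
  · rw [hxe, hye]
    exact Finset.sum_congr rfl fun i _ => by rw [(hall i).1]
  · rw [hxe, hze]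
    exact Finset.sum_congr rfl fun i _ => by rw [(hall i).1, (hall i).2]

/-- 6-cycle part of Theorem 5: with `p ≥ δ·M + 1` where `M = max B(n,k,d,δ)`, elements
`a₀, a₁, a₂, b₀, b₁, b₂` of the generalized Behrend set and nonzero `α, β, α+β` of
absolute value at most `δ`, the divisibilities `p ∣ (α+β)a₀ − βa₂ − αa₁` and
`p ∣ (α+β)(a₀+b₀) − β(a₂+b₂) − α(a₁+b₁)` force `a₀ = a₁ = a₂` and `b₀ = b₁ = b₂`. -/
theorem stmt_13 (n d δ k : ℕ) (hn : 2 ≤ n) (hd : 1 ≤ d) (hδ : 2 ≤ δ) (hk : k ≤ n * d ^ 2)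
    (M : ℕ) (hM : M ∈ behrendSet n k d δ) (hMmax : ∀ y ∈ behrendSet n k d δ, y ≤ M)
    (p : ℕ) (hp : 0 < p) (hpM : δ * M + 1 ≤ p)
    (a₀ a₁ a₂ b₀ b₁ b₂ : ℕ)
    (ha₀ : a₀ ∈ behrendSet n k d δ) (ha₁ : a₁ ∈ behrendSet n k d δ)
    (ha₂ : a₂ ∈ behrendSet n k d δ)
    (hb₀ : b₀ ∈ behrendSet n k d δ) (hb₁ : b₁ ∈ behrendSet n k d δ)
    (hb₂ : b₂ ∈ behrendSet n k d δ)
    (α β : ℤ) (hα : α ≠ 0) (hβ : β ≠ 0) (hαβ : α + β ≠ 0)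
    (hαδ : |α| ≤ (δ : ℤ)) (hβδ : |β| ≤ (δ : ℤ)) (hαβδ : |α + β| ≤ (δ : ℤ))
    (hdiv1 : (p : ℤ) ∣ (α + β) * (a₀ : ℤ) - β * (a₂ : ℤ) - α * (a₁ : ℤ))
    (hdiv2 : (p : ℤ) ∣ (α + β) * ((a₀ : ℤ) + (b₀ : ℤ)) - β * ((a₂ : ℤ) + (b₂ : ℤ)) -
        α * ((a₁ : ℤ) + (b₁ : ℤ))) :
    (a₀ = a₁ ∧ a₁ = a₂) ∧ (b₀ = b₁ ∧ b₁ = b₂) := by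
  have hMle : ∀ x : ℕ, x ∈ behrendSet n k d δ → ((x : ℤ) ≤ (M : ℤ)) := fun x hx => by
    exact_mod_cast hMmax x hx
  have hpδM : (δ : ℤ) * (M : ℤ) < (p : ℤ) := by
    have : δ * M < p := by omega
    exact_mod_cast this
  -- the divisible quantities vanish
  have hzero : ∀ x₀ x₁ x₂ : ℕ, x₀ ∈ behrendSet n k d δ → x₁ ∈ behrendSet n k d δ →
      x₂ ∈ behrendSet n k d δ →
      ((p : ℤ) ∣ (α + β) * (x₀ : ℤ) - β * (x₂ : ℤ) - α * (x₁ : ℤ)) →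
      (α + β) * (x₀ : ℤ) - β * (x₂ : ℤ) - α * (x₁ : ℤ) = 0 := by
    intro x₀ x₁ x₂ h₀ h₁ h₂ hdvd
    apply Int.eq_zero_of_abs_lt_dvd hdvd
    have hb := triBound (δ : ℤ) (M : ℤ) (α + β) (-α) (-β) (x₀ : ℤ) (x₁ : ℤ) (x₂ : ℤ)
      (by ring) hαβδ (by rwa [abs_neg]) (by rwa [abs_neg])
      (by positivity) (hMle _ h₀) (by positivity) (hMle _ h₁) (by positivity) (hMle _ h₂)
    have he : (α + β) * (x₀ : ℤ) - β * (x₂ : ℤ) - α * (x₁ : ℤ)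
        = (α + β) * (x₀ : ℤ) + (-α) * (x₁ : ℤ) + (-β) * (x₂ : ℤ) := by ring
    rw [he]
    exact lt_of_le_of_lt hb hpδM
  have E1 := hzero a₀ a₁ a₂ ha₀ ha₁ ha₂ hdiv1
  have hdivb : (p : ℤ) ∣ (α + β) * (b₀ : ℤ) - β * (b₂ : ℤ) - α * (b₁ : ℤ) := by
    have h := dvd_sub hdiv2 hdiv1
    have he : ((α + β) * ((a₀ : ℤ) + (b₀ : ℤ)) - β * ((a₂ : ℤ) + (b₂ : ℤ)) -
        α * ((a₁ : ℤ) + (b₁ : ℤ))) - ((α + β) * (a₀ : ℤ) - β * (a₂ : ℤ) - α * (a₁ : ℤ))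
        = (α + β) * (b₀ : ℤ) - β * (b₂ : ℤ) - α * (b₁ : ℤ) := by ring
    rwa [he] at h
  have E2 := hzero b₀ b₁ b₂ hb₀ hb₁ hb₂ hdivb
  -- sign analysis reduces to `behrendKey`
  have main : ∀ x₀ x₁ x₂ : ℕ, x₀ ∈ behrendSet n k d δ → x₁ ∈ behrendSet n k d δ →
      x₂ ∈ behrendSet n k d δ →
      (α + β) * (x₀ : ℤ) - β * (x₂ : ℤ) - α * (x₁ : ℤ) = 0 →
      x₀ = x₁ ∧ x₁ = x₂ := by
    intro x₀ x₁ x₂ h₀ h₁ h₂ hE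
    rcases hα.lt_or_gt with hαn | hαp
    · rcases hβ.lt_or_gt with hβn | hβp
      · -- α < 0, β < 0
        have hb : -α + -β ≤ (δ : ℤ) := by
          have := hαβδ
          rw [abs_of_neg (by linarith : α + β < 0)] at this
          linarith
        have hkey := behrendKey n k d δ x₀ x₁ x₂ h₀ h₁ h₂ (-α) (-β)
          (by linarith) (by linarith) hb (by linear_combination -hE)
        exact ⟨hkey.1, hkey.1 ▸ hkey.2⟩
      · -- α < 0, β > 0
        rcases hαβ.lt_or_gt with hsn | hsp
        · -- α + β < 0 : (-α) x₁ = (-(α+β)) x₀ + β x₂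
          have hb : -(α + β) + β ≤ (δ : ℤ) := by
            have := hαδ
            rw [abs_of_neg hαn] at this
            linarith
          have hkey := behrendKey n k d δ x₁ x₀ x₂ h₁ h₀ h₂ (-(α + β)) β
            (by linarith) hβp hb (by linear_combination hE)
          exact ⟨hkey.1.symm, hkey.2⟩
        · -- α + β > 0 : β x₂ = (α+β) x₀ + (-α) x₁
          have hb : (α + β) + -α ≤ (δ : ℤ) := by
            have := hβδ
            rw [abs_of_pos hβp] at this
            linarith
          have hkey := behrendKey n k d δ x₂ x₀ x₁ h₂ h₀ h₁ (α + β) (-α)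
            hsp (by linarith) hb (by linear_combination -hE)
          exact ⟨hkey.1.symm.trans hkey.2, hkey.2.symm⟩
    · rcases hβ.lt_or_gt with hβn | hβp
      · -- α > 0, β < 0
        rcases hαβ.lt_or_gt with hsn | hsp
        · -- α + β < 0 : (-β) x₂ = (-(α+β)) x₀ + α x₁
          have hb : -(α + β) + α ≤ (δ : ℤ) := by
            have := hβδ
            rw [abs_of_neg hβn] at this
            linarith
          have hkey := behrendKey n k d δ x₂ x₀ x₁ h₂ h₀ h₁ (-(α + β)) α
            (by linarith) hαp hb (by linear_combination hE)
          exact ⟨hkey.1.symm.trans hkey.2, hkey.2.symm⟩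
        · -- α + β > 0 : α x₁ = (α+β) x₀ + (-β) x₂
          have hb : (α + β) + -β ≤ (δ : ℤ) := by
            have := hαδ
            rw [abs_of_pos hαp] at this
            linarith
          have hkey := behrendKey n k d δ x₁ x₀ x₂ h₁ h₀ h₂ (α + β) (-β)
            hsp (by linarith) hb (by linear_combination -hE)
          exact ⟨hkey.1.symm, hkey.2⟩
      · -- α > 0, β > 0 : (α+β) x₀ = α x₁ + β x₂
        have hb : α + β ≤ (δ : ℤ) := by
          have := hαβδ
          rw [abs_of_pos (by linarith : 0 < α + β)] at this
          linarith
        have hkey := behrendKey n k d δ x₀ x₁ x₂ h₀ h₁ h₂ α β hαp hβp hb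
          (by linear_combination hE)
        exact ⟨hkey.1, hkey.1 ▸ hkey.2⟩
  exact ⟨main a₀ a₁ a₂ ha₀ ha₁ ha₂ E1, main b₀ b₁ b₂ hb₀ hb₁ hb₂ E2⟩
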